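/- Let n ≥ 2, c > 0, and let L_u be the n×n Laplacian of the uniformly weighted line graph. For every integer k with 1 ≤ k ≤ n, the vector v_k ∈ ℝⁿ with entries v_k(j) = sin((2j−1)kπ/(2n)) for j = 1, …, n satisfies (L_u + 2c·e₁e₁ᵀ + 2c·e_ne_nᵀ) v_k = 2c(1 − cos(kπ/n)) v_k. Hence the DST-2 basis vectors are eigenvectors of the generalized graph Laplacian of the line graph with self-loops of weight 2c at both the first and last vertices. -/

import Mathlib

open Matrix Real

/-- The combinatorial Laplacian of the uniformly weighted line graph on `n` vertices with
edge weight `c`. -/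
def lineLaplacian (n : ℕ) (c : ℝ) : Matrix (Fin n) (Fin n) ℝ :=
  Matrix.of fun i j =>
    if i = j then (if i.val = 0 ∨ i.val = n - 1 then c else 2 * c)
    else if i.val + 1 = j.val ∨ j.val + 1 = i.val then -c else 0

private lemma trig_left (x : ℝ) :
    3 * Real.sin x - Real.sin (3 * x) = 2 * (1 - Real.cos (2 * x)) * Real.sin x := by
  rw [Real.sin_three_mul, Real.cos_two_mul]
  linear_combination 4 * Real.sin x * (Real.sin_sq_add_cos_sq x)

private lemma trig_mid (x y : ℝ) :
    2 * Real.sin y - Real.sin (y - 2 * x) - Real.sin (y + 2 * x)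
      = 2 * (1 - Real.cos (2 * x)) * Real.sin y := by
  rw [Real.sin_sub, Real.sin_add]; ring

private lemma trig_right (x y : ℝ) (h : Real.sin (y + x) = 0) :
    3 * Real.sin y - Real.sin (y - 2 * x) = 2 * (1 - Real.cos (2 * x)) * Real.sin y := by
  rw [Real.sin_add] at h
  rw [Real.sin_sub, Real.cos_two_mul, Real.sin_two_mul]
  linear_combination 2 * Real.cos x * h

/-- DST-2 basis vectors are eigenvectors of the line graph Laplacian with self-loops of weight `2c` at both the first and last vertices. For `1 ≤ k ≤ n` the given vector is an eigenvector
with the stated eigenvalue. -/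
theorem dst2_eigenvectors (n : ℕ) (hn : 2 ≤ n) (c : ℝ) (hc : 0 < c)
    (k : ℕ) (hk1 : 1 ≤ k) (hk2 : k ≤ n) :
    (lineLaplacian n c + Matrix.single (⟨0, by omega⟩ : Fin n) ⟨0, by omega⟩ (2 * c) + Matrix.single (⟨n - 1, by omega⟩ : Fin n) ⟨n - 1, by omega⟩ (2 * c)) *ᵥ
        (fun j : Fin n => Real.sin ((2 * (j : ℝ) + 1) * (k : ℝ) * Real.pi / (2 * n))) =
      (2 * c * (1 - Real.cos ((k : ℝ) * Real.pi / n))) •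
        (fun j : Fin n => Real.sin ((2 * (j : ℝ) + 1) * (k : ℝ) * Real.pi / (2 * n))) := by
  have hn0 : (n : ℝ) ≠ 0 := by positivity
  set A : Matrix (Fin n) (Fin n) ℝ :=
    (lineLaplacian n c + Matrix.single (⟨0, by omega⟩ : Fin n) ⟨0, by omega⟩ (2 * c) + Matrix.single (⟨n - 1, by omega⟩ : Fin n) ⟨n - 1, by omega⟩ (2 * c)) with hA
  set x : ℝ := (k : ℝ) * Real.pi / (2 * n) with hx
  set v : Fin n → ℝ := fun j : Fin n => Real.sin ((2 * (j : ℝ) + 1) * (k : ℝ) * Real.pi / (2 * n)) with hv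
  have hvv : ∀ j : Fin n, v j = Real.sin ((2 * (j : ℝ) + 1) * x) := by
    intro j; rw [hv, hx]; ring_nf
  have hcos : (k : ℝ) * Real.pi / n = 2 * x := by
    rw [hx]; field_simp
  have key : ∀ (i : Fin n) (t : Finset (Fin n)),
      (∀ j, j ∉ t → A i j * v j = 0) → (A *ᵥ v) i = ∑ j ∈ t, A i j * v j := by
    intro i t ht
    rw [Matrix.mulVec, dotProduct]
    exact (Finset.sum_subset (Finset.subset_univ t) (fun j _ hj => ht j hj)).symm
  funext i
  rw [Pi.smul_apply, smul_eq_mul, hcos]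
  by_cases h0 : i.val = 0
  · -- first row
    have hi : i = ⟨0, by omega⟩ := by apply Fin.ext; simpa using h0
    rw [hi]
    rw [key _ ({⟨0, by omega⟩, ⟨1, by omega⟩} : Finset (Fin n))
      (by
        intro j hj
        simp only [Finset.mem_insert, Finset.mem_singleton, Fin.ext_iff, Fin.val_mk] at hj
        push_neg at hj
        have hA0 : A ⟨0, by omega⟩ j = 0 := by
          simp only [hA, Matrix.add_apply, lineLaplacian, Matrix.of_apply,
            Matrix.single, Fin.ext_iff, Fin.val_mk, eq_self_iff_true, true_or, or_true,
            true_and, and_true, if_true, or_false, false_or, false_and, and_false, not_false_iff]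
          split_ifs <;> first | ring1 | (exfalso; (try simp only [or_false, false_or, not_or] at *); all_goals omega)
        rw [hA0, zero_mul])]
    rw [Finset.sum_pair (by simp only [ne_eq, Fin.ext_iff, Fin.val_mk]; omega)]
    have e00 : A ⟨0, by omega⟩ ⟨0, by omega⟩ = 3 * c := by
      simp only [hA, Matrix.add_apply, lineLaplacian, Matrix.of_apply,
        Matrix.single, Fin.ext_iff, Fin.val_mk, eq_self_iff_true, true_or, or_true,
            true_and, and_true, if_true, or_false, false_or, false_and, and_false, not_false_iff]
      split_ifs <;> first | ring1 | (exfalso; (try simp only [or_false, false_or, not_or] at *); all_goals omega)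
    have e01 : A ⟨0, by omega⟩ ⟨1, by omega⟩ = -c := by
      simp only [hA, Matrix.add_apply, lineLaplacian, Matrix.of_apply,
        Matrix.single, Fin.ext_iff, Fin.val_mk, eq_self_iff_true, true_or, or_true,
            true_and, and_true, if_true, or_false, false_or, false_and, and_false, not_false_iff]
      split_ifs <;> first | ring1 | (exfalso; (try simp only [or_false, false_or, not_or] at *); all_goals omega)
    rw [e00, e01]; simp only [hvv]
    norm_num
    linear_combination c * trig_left x
  · by_cases h1 : i.val = n - 1
    · -- last row
      have hi : i = ⟨n - 1, by omega⟩ := by apply Fin.ext; simpa using h1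
      rw [hi]
      rw [key _ ({⟨n - 2, by omega⟩, ⟨n - 1, by omega⟩} : Finset (Fin n))
        (by
          intro j hj
          simp only [Finset.mem_insert, Finset.mem_singleton, Fin.ext_iff, Fin.val_mk] at hj
          push_neg at hj
          have hA0 : A ⟨n - 1, by omega⟩ j = 0 := by
            simp only [hA, Matrix.add_apply, lineLaplacian, Matrix.of_apply,
              Matrix.single, Fin.ext_iff, Fin.val_mk, eq_self_iff_true, true_or, or_true,
            true_and, and_true, if_true, or_false, false_or, false_and, and_false, not_false_iff]
            split_ifs <;> first | ring1 | (exfalso; (try simp only [or_false, false_or, not_or] at *); all_goals omega)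
          rw [hA0, zero_mul])]
      rw [Finset.sum_pair (by simp only [ne_eq, Finset.mem_insert, Finset.mem_singleton, Fin.ext_iff, Fin.val_mk, not_or]; omega)]
      have e10 : A ⟨n - 1, by omega⟩ ⟨n - 2, by omega⟩ = -c := by
        simp only [hA, Matrix.add_apply, lineLaplacian, Matrix.of_apply,
          Matrix.single, Fin.ext_iff, Fin.val_mk, eq_self_iff_true, true_or, or_true,
            true_and, and_true, if_true, or_false, false_or, false_and, and_false, not_false_iff]
        split_ifs <;> first | ring1 | (exfalso; (try simp only [or_false, false_or, not_or] at *); all_goals omega)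
      have e11 : A ⟨n - 1, by omega⟩ ⟨n - 1, by omega⟩ = 3 * c := by
        simp only [hA, Matrix.add_apply, lineLaplacian, Matrix.of_apply,
          Matrix.single, Fin.ext_iff, Fin.val_mk, eq_self_iff_true, true_or, or_true,
            true_and, and_true, if_true, or_false, false_or, false_and, and_false, not_false_iff]
        split_ifs <;> first | ring1 | (exfalso; (try simp only [or_false, false_or, not_or] at *); all_goals omega)
      rw [e10, e11]; simp only [hvv]
      have c1 : ((⟨n - 2, by omega⟩ : Fin n) : ℝ) = (n : ℝ) - 2 := by
        simp only [Fin.val_mk]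
        push_cast [Nat.cast_sub (by omega : 2 ≤ n)]
        ring
      have c2 : ((⟨n - 1, by omega⟩ : Fin n) : ℝ) = (n : ℝ) - 1 := by
        simp only [Fin.val_mk]
        push_cast [Nat.cast_sub (by omega : 1 ≤ n)]
        ring
      rw [c1, c2]
      set y : ℝ := (2 * ((n : ℝ) - 1) + 1) * x with hy
      have harg : (2 * ((n : ℝ) - 2) + 1) * x = y - 2 * x := by rw [hy]; ring
      rw [harg]
      have hsin : Real.sin (y + x) = 0 := by
        have : y + x = (k : ℝ) * Real.pi := by
          rw [hy, hx]; field_simp; ring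
        rw [this]
        exact Real.sin_nat_mul_pi k
      linear_combination c * trig_right x y hsin
    · -- middle rows
      have hlb : 1 ≤ i.val := by omega
      have hub : i.val + 1 ≤ n - 1 := by omega
      rw [key _ ({⟨i.val - 1, by omega⟩, i, ⟨i.val + 1, by omega⟩} : Finset (Fin n))
        (by
          intro j hj
          simp only [Finset.mem_insert, Finset.mem_singleton, Fin.ext_iff, Fin.val_mk] at hj
          push_neg at hj
          have hA0 : A i j = 0 := by
            simp only [hA, Matrix.add_apply, lineLaplacian, Matrix.of_apply,
              Matrix.single, Fin.ext_iff, Fin.val_mk, eq_self_iff_true, true_or, or_true,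
            true_and, and_true, if_true, or_false, false_or, false_and, and_false, not_false_iff]
            split_ifs <;> first | ring1 | (exfalso; (try simp only [or_false, false_or, not_or] at *); all_goals omega)
          rw [hA0, zero_mul])]
      rw [Finset.sum_insert (by simp only [ne_eq, Finset.mem_insert, Finset.mem_singleton, Fin.ext_iff, Fin.val_mk, not_or]; omega),
        Finset.sum_pair (by simp only [ne_eq, Finset.mem_insert, Finset.mem_singleton, Fin.ext_iff, Fin.val_mk, not_or]; omega)]
      have em : A i ⟨i.val - 1, by omega⟩ = -c := by
        simp only [hA, Matrix.add_apply, lineLaplacian, Matrix.of_apply,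
          Matrix.single, Fin.ext_iff, Fin.val_mk, eq_self_iff_true, true_or, or_true,
            true_and, and_true, if_true, or_false, false_or, false_and, and_false, not_false_iff]
        split_ifs <;> first | ring1 | (exfalso; (try simp only [or_false, false_or, not_or] at *); all_goals omega)
      have ed : A i i = 2 * c := by
        simp only [hA, Matrix.add_apply, lineLaplacian, Matrix.of_apply,
          Matrix.single, Fin.ext_iff, Fin.val_mk, eq_self_iff_true, true_or, or_true,
            true_and, and_true, if_true, or_false, false_or, false_and, and_false, not_false_iff]
        split_ifs <;> first | ring1 | (exfalso; (try simp only [or_false, false_or, not_or] at *); all_goals omega)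
      have ep : A i ⟨i.val + 1, by omega⟩ = -c := by
        simp only [hA, Matrix.add_apply, lineLaplacian, Matrix.of_apply,
          Matrix.single, Fin.ext_iff, Fin.val_mk, eq_self_iff_true, true_or, or_true,
            true_and, and_true, if_true, or_false, false_or, false_and, and_false, not_false_iff]
        split_ifs <;> first | ring1 | (exfalso; (try simp only [or_false, false_or, not_or] at *); all_goals omega)
      rw [em, ed, ep]; simp only [hvv]
      have c1 : ((⟨i.val - 1, by omega⟩ : Fin n) : ℝ) = (i.val : ℝ) - 1 := by
        simp only [Fin.val_mk]
        push_cast [Nat.cast_sub hlb]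
        ring
      have c2 : ((⟨i.val + 1, by omega⟩ : Fin n) : ℝ) = (i.val : ℝ) + 1 := by
        simp only [Fin.val_mk]; push_cast; ring
      rw [c1, c2]
      set y : ℝ := (2 * (i.val : ℝ) + 1) * x with hy
      rw [show (2 * ((i.val : ℝ) - 1) + 1) * x = y - 2 * x by rw [hy]; ring,
        show (2 * ((i.val : ℝ) + 1) + 1) * x = y + 2 * x by rw [hy]; ring]
      linear_combination c * trig_mid x y
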